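/- Let q be an odd prime power with q ≡ 1 (mod 4), let F be a finite field with q elements, and let μ ∈ F× have multiplicative order 2^k, where 2^k = (q−1)₂ is the 2-part of q − 1. Then the subgroup S of SL₂(F) generated by the diagonal matrix diag(μ, μ⁻¹) and the matrix w = [[0,−1],[1,0]] has order 2^(k+1) and is a Sylow 2-subgroup of SL₂(F). -/

import Mathlib

open Matrix

lemma card_SL2 (F : Type*) [Field F] [Fintype F] :
    Nat.card (Matrix.SpecialLinearGroup (Fin 2) F) * (Fintype.card F - 1)
      = Nat.card (GL (Fin 2) F) := by
  have hsurj : Function.Surjective (Matrix.GeneralLinearGroup.det (n := Fin 2) (R := F)) := by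
    intro u
    refine ⟨⟨!![(u:F),0;0,1], !![((u⁻¹:Fˣ):F),0;0,1], ?_, ?_⟩, ?_⟩
    · ext i j; fin_cases i <;> fin_cases j <;> simp [Matrix.mul_apply, Fin.sum_univ_two]
    · ext i j; fin_cases i <;> fin_cases j <;> simp [Matrix.mul_apply, Fin.sum_univ_two]
    · ext; simp [Matrix.det_fin_two]
  have hker : Nat.card (Matrix.SpecialLinearGroup (Fin 2) F)
      = Nat.card (Matrix.GeneralLinearGroup.det (n := Fin 2) (R := F)).ker := by
    refine Nat.card_eq_of_bijective
      (fun A => ⟨Matrix.SpecialLinearGroup.toGL A, ?_⟩) ⟨?_, ?_⟩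
    · ext
      simp [Matrix.SpecialLinearGroup.toGL]
    · intro A B h
      apply Subtype.ext
      exact congrArg (fun x => (x.val : GL (Fin 2) F).val) h
    · rintro ⟨g, hg⟩
      have hdet : Matrix.det (g : Matrix (Fin 2) (Fin 2) F) = 1 := by
        have := congrArg Units.val hg
        simpa using this
      exact ⟨⟨(g : Matrix (Fin 2) (Fin 2) F), hdet⟩, by
        apply Subtype.ext; apply Units.ext; rfl⟩
  rw [hker]
  have := Subgroup.card_eq_card_quotient_mul_card_subgroup
    (Matrix.GeneralLinearGroup.det (n := Fin 2) (R := F)).ker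
  rw [this]
  have hquot : Nat.card (GL (Fin 2) F ⧸ (Matrix.GeneralLinearGroup.det (n := Fin 2) (R := F)).ker)
      = Fintype.card F - 1 := by
    rw [Nat.card_congr (QuotientGroup.quotientKerEquivOfSurjective _ hsurj).toEquiv]
    classical
    rw [Nat.card_eq_fintype_card, Fintype.card_units]
  rw [hquot, mul_comm]

lemma card_SL2' (F : Type*) [Field F] [Fintype F] :
    Nat.card (Matrix.SpecialLinearGroup (Fin 2) F)
      = Fintype.card F * (Fintype.card F - 1) * (Fintype.card F + 1) := by
  have h := card_SL2 F
  rw [Matrix.card_GL_field] at h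
  set q := Fintype.card F with hq
  have hq2 : 2 ≤ q := Fintype.one_lt_card
  have h1 : q ^ 2 - q ^ (0:ℕ) = (q + 1) * (q - 1) := by
    rw [pow_zero, ← one_pow 2, Nat.sq_sub_sq, one_pow]
  have h2 : q ^ 2 - q ^ (1:ℕ) = q * (q - 1) := by
    rw [pow_one, pow_two, ← Nat.mul_sub_one]
  simp only [Fin.prod_univ_two, Fin.val_zero, Fin.val_one] at h
  rw [h1, h2] at h
  have hpos : 0 < q - 1 := by omega
  apply Nat.eq_of_mul_eq_mul_right hpos
  rw [h]; ring

/-- The diagonal embedding `u ↦ diag(u, u⁻¹)` into `SL₂`. -/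
def diagHom (F : Type*) [Field F] : Fˣ →* Matrix.SpecialLinearGroup (Fin 2) F where
  toFun u := ⟨!![(u : F), 0; 0, ((u⁻¹ : Fˣ) : F)], by
    simp [Matrix.det_fin_two]⟩
  map_one' := by
    apply Subtype.ext
    simp [Matrix.one_fin_two]
  map_mul' u v := by
    apply Subtype.ext
    simp only [Matrix.SpecialLinearGroup.coe_mul]
    show _ = (!![(u : F), 0; 0, ((u⁻¹ : Fˣ) : F)] : Matrix (Fin 2) (Fin 2) F) * !![(v : F), 0; 0, ((v⁻¹ : Fˣ) : F)]
    rw [Matrix.mul_fin_two]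
    congr 1 <;> push_cast <;> ring_nf

lemma diagHom_coe (F : Type*) [Field F] (u : Fˣ) :
    ((diagHom F u : Matrix.SpecialLinearGroup (Fin 2) F) : Matrix (Fin 2) (Fin 2) F)
      = !![(u : F), 0; 0, ((u⁻¹ : Fˣ) : F)] := rfl

lemma diagHom_injective (F : Type*) [Field F] : Function.Injective (diagHom F) := by
  intro u v h
  have h00 := congrFun (congrFun (congrArg Subtype.val h) 0) 0
  simp only [diagHom_coe] at h00
  exact Units.ext (by simpa using h00)

set_option maxHeartbeats 1600000 in
/-- Let `q ≡ 1 (mod 4)` be an odd prime power, `F` a finite field with `q`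
elements, and `μ ∈ Fˣ` of multiplicative order `2 ^ k` where `2 ^ k` is the
2-part of `q - 1`.  Then the subgroup of `SL₂(F)` generated by `diag(μ, μ⁻¹)`
and `w = [[0,-1],[1,0]]` has order `2 ^ (k + 1)` and is a Sylow 2-subgroup. -/
theorem closure_is_sylow_two_subgroup (F : Type*) [Field F] [Fintype F]
    (hq : Fintype.card F % 4 = 1) (k : ℕ)
    (hk : k = (Fintype.card F - 1).factorization 2) (μ : Fˣ)
    (hμ : orderOf μ = 2 ^ k)
    (a w : Matrix.SpecialLinearGroup (Fin 2) F)
    (ha : (a : Matrix (Fin 2) (Fin 2) F) = !![(μ : F), 0; 0, ((μ⁻¹ : Fˣ) : F)])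
    (hw : (w : Matrix (Fin 2) (Fin 2) F) = !![0, -1; 1, 0]) :
    Nat.card (Subgroup.closure {a, w}) = 2 ^ (k + 1) ∧
    ∃ P : Sylow 2 (Matrix.SpecialLinearGroup (Fin 2) F),
      (P : Subgroup (Matrix.SpecialLinearGroup (Fin 2) F))
        = Subgroup.closure {a, w} := by
  classical
  set q := Fintype.card F with hqdef
  have hq2 : 2 ≤ q := Fintype.one_lt_card
  have hq5 : 5 ≤ q := by omega
  -- k ≥ 2
  have hk2 : 2 ≤ k := by
    rw [hk]
    have h4 : 2 ^ 2 ∣ q - 1 := by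
      have : (4:ℕ) ∣ q - 1 := by omega
      simpa using this
    exact (Nat.Prime.pow_dvd_iff_le_factorization Nat.prime_two (by omega)).mp h4
  -- a is the image of μ
  have haφ : a = diagHom F μ := Subtype.ext (by rw [ha, diagHom_coe])
  have horder : orderOf a = 2 ^ k := by
    rw [haφ, orderOf_injective (diagHom F) (diagHom_injective F) μ, hμ]
  -- -1 = μ ^ 2^(k-1)
  have hν : μ ^ 2 ^ (k - 1) = (-1 : Fˣ) := by
    set ν := μ ^ 2 ^ (k - 1) with hνdef
    have hsq : ν * ν = 1 := by
      rw [hνdef, ← pow_add, ← two_mul, ← pow_succ']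
      have : k - 1 + 1 = k := by omega
      rw [this, ← hμ, pow_orderOf_eq_one]
    have hne : ν ≠ 1 := by
      intro h1
      have := orderOf_dvd_of_pow_eq_one (n := 2 ^ (k - 1)) (by rw [← hνdef, h1])
      rw [hμ] at this
      have := Nat.pow_dvd_pow_iff_le_right (x := 2) (by norm_num) |>.mp this
      omega
    have hsqF : (ν : F) * (ν : F) = 1 := by rw [← Units.val_mul, hsq, Units.val_one]
    rcases mul_self_eq_one_iff.mp hsqF with h | h
    · exact absurd (Units.ext h) hne
    · exact Units.ext (by simpa using h)
  -- w² = a ^ 2^(k-1)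
  have hw2 : w * w = a ^ 2 ^ (k - 1) := by
    rw [haφ, ← map_pow, hν]
    apply Subtype.ext
    rw [Matrix.SpecialLinearGroup.coe_mul, hw, Matrix.mul_fin_two, diagHom_coe]
    norm_num
  -- semiconjugation
  have hsemi : SemiconjBy w a a⁻¹ := by
    have hainv : a⁻¹ = diagHom F μ⁻¹ := by rw [haφ, ← map_inv]
    show w * a = a⁻¹ * w
    apply Subtype.ext
    rw [Matrix.SpecialLinearGroup.coe_mul, Matrix.SpecialLinearGroup.coe_mul,
      hw, ha, hainv, diagHom_coe, Matrix.mul_fin_two, Matrix.mul_fin_two]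
    norm_num
  set H := Subgroup.zpowers a with hHdef
  have hswap : ∀ x ∈ H, w * x = x⁻¹ * w := by
    rintro x ⟨n, rfl⟩
    have h := (hsemi.zpow_right n : SemiconjBy w (a ^ n) (a⁻¹ ^ n))
    rw [_root_.inv_zpow] at h
    exact h
  have hw2H : w * w ∈ H := by
    rw [hw2]
    exact Subgroup.pow_mem _ (Subgroup.mem_zpowers a) _
  -- the candidate subgroup
  set T : Subgroup (Matrix.SpecialLinearGroup (Fin 2) F) :=
    { carrier := (H : Set (Matrix.SpecialLinearGroup (Fin 2) F)) ∪ (· * w) '' (H : Set (Matrix.SpecialLinearGroup (Fin 2) F))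
      one_mem' := Or.inl H.one_mem
      mul_mem' := by
        rintro x y (hx | ⟨x', hx', rfl⟩) (hy | ⟨y', hy', rfl⟩)
        · exact Or.inl (H.mul_mem hx hy)
        · refine Or.inr ⟨x * y', H.mul_mem hx hy', ?_⟩
          show x * y' * w = x * (y' * w)
          rw [mul_assoc]
        · refine Or.inr ⟨x' * y⁻¹, H.mul_mem hx' (H.inv_mem hy), ?_⟩
          show x' * y⁻¹ * w = x' * w * y
          rw [mul_assoc x' w y, hswap y hy, ← mul_assoc]
        · refine Or.inl ?_
          have key : x' * w * (y' * w) = (x' * y'⁻¹) * (w * w) := by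
            rw [mul_assoc x' w _, ← mul_assoc w y' w, hswap y' hy',
              mul_assoc (y'⁻¹) w w, ← mul_assoc x' y'⁻¹ (w * w)]
          rw [key]
          exact H.mul_mem (H.mul_mem hx' (H.inv_mem hy')) hw2H
      inv_mem' := by
        rintro x (hx | ⟨x', hx', rfl⟩)
        · exact Or.inl (H.inv_mem hx)
        · refine Or.inr ⟨(w * w)⁻¹ * x', H.mul_mem (H.inv_mem hw2H) hx', ?_⟩
          have hxw : w * x'⁻¹ = x' * w := by rw [hswap x'⁻¹ (H.inv_mem hx'), inv_inv]
          show (w * w)⁻¹ * x' * w = (x' * w)⁻¹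
          rw [_root_.mul_inv_rev x' w, mul_assoc, ← hxw, _root_.mul_inv_rev w w,
            mul_assoc w⁻¹ w⁻¹ (w * x'⁻¹), ← mul_assoc w⁻¹ w x'⁻¹, inv_mul_cancel, one_mul] } with hTdef
  set S := Subgroup.closure {a, w} with hSdef
  have hST : S ≤ T := by
    rw [hSdef]
    apply Subgroup.closure_le T |>.mpr
    rintro x (rfl | rfl)
    · exact Or.inl (Subgroup.mem_zpowers _)
    · exact Or.inr ⟨1, H.one_mem, one_mul _⟩
  have hHS : H ≤ S := by
    rw [hHdef, hSdef]
    apply Subgroup.zpowers_le.mpr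
    exact Subgroup.subset_closure (by simp)
  have hwS : w ∈ S := Subgroup.subset_closure (by simp)
  have hwH : w ∉ H := by
    rintro ⟨n, hn⟩
    have hn' : diagHom F (μ ^ n) = w := by rw [map_zpow, ← haφ]; exact hn
    have h10 := congrFun (congrFun (congrArg Subtype.val hn') 1) 0
    rw [diagHom_coe, hw] at h10
    simpa using h10
  have hHcard : Nat.card H = 2 ^ k := by rw [hHdef, Nat.card_zpowers, horder]
  -- cardinality bounds
  have hTcard : Nat.card T ≤ 2 ^ (k + 1) := by
    have e1 : ((· * w) '' (H : Set (Matrix.SpecialLinearGroup (Fin 2) F))).ncard = (H : Set (Matrix.SpecialLinearGroup (Fin 2) F)).ncard :=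
      by exact Set.ncard_image_of_injective _ (fun x y hxy => mul_right_cancel hxy)
    have e2 : (H : Set (Matrix.SpecialLinearGroup (Fin 2) F)).ncard = 2 ^ k := by
      rw [← Nat.card_coe_set_eq, ← hHcard]; rfl
    have e3 : Nat.card T = ((H : Set (Matrix.SpecialLinearGroup (Fin 2) F)) ∪ (· * w) '' (H : Set (Matrix.SpecialLinearGroup (Fin 2) F))).ncard := by
      rw [← Nat.card_coe_set_eq]; rfl
    have e4 := Set.ncard_union_le ((H : Set (Matrix.SpecialLinearGroup (Fin 2) F))) ((· * w) '' (H : Set (Matrix.SpecialLinearGroup (Fin 2) F)))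
    have e5 : 2 ^ (k + 1) = 2 ^ k + 2 ^ k := by ring
    omega
  have hSle : Nat.card S ≤ 2 ^ (k + 1) := le_trans (Subgroup.card_le_of_le hST) hTcard
  have hSne : Nat.card S ≠ 2 ^ k := by
    intro h
    have : H = S := Subgroup.eq_of_le_of_card_ge hHS (by rw [h, hHcard])
    exact hwH (this ▸ hwS)
  have hdvd : Nat.card H ∣ Nat.card S := Subgroup.card_dvd_of_le hHS
  obtain ⟨c, hc⟩ := hdvd
  have hpos : 0 < 2 ^ k := Nat.pow_pos (by norm_num)
  have hcardpos : 0 < Nat.card S := Nat.card_pos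
  rw [hHcard] at hc
  have hle2 : c ≤ 2 := by
    have h2 : 2 ^ (k + 1) = 2 ^ k * 2 := pow_succ 2 k
    have hh := hSle
    rw [hc, h2] at hh
    exact Nat.le_of_mul_le_mul_left hh hpos
  have hne1 : c ≠ 1 := by rintro rfl; rw [mul_one] at hc; exact hSne hc
  have hne0 : c ≠ 0 := by rintro rfl; rw [mul_zero] at hc; omega
  have hc2 : c = 2 := by omega
  have hScard : Nat.card S = 2 ^ (k + 1) := by rw [hc, hc2, pow_succ]
  refine ⟨hScard, ?_⟩
  -- Sylow
  have hfact : (Nat.card (Matrix.SpecialLinearGroup (Fin 2) F)).factorization 2 = k + 1 := by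
    rw [card_SL2' F, ← hqdef]
    have hqne : q ≠ 0 := by omega
    have hq1ne : q - 1 ≠ 0 := by omega
    have hq1ne' : q + 1 ≠ 0 := by omega
    rw [Nat.factorization_mul (by positivity) hq1ne', Nat.factorization_mul hqne hq1ne]
    simp only [Finsupp.add_apply]
    have h0 : q.factorization 2 = 0 :=
      Nat.factorization_eq_zero_of_not_dvd (by omega)
    have h1 : (q + 1).factorization 2 = 1 := by
      have hd : 2 ^ 1 ∣ q + 1 := by simpa using (by omega : 2 ∣ q + 1)
      have hnd : ¬ 2 ^ 2 ∣ q + 1 := by simpa using (by omega : ¬ 4 ∣ q + 1)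
      have hle := (Nat.Prime.pow_dvd_iff_le_factorization Nat.prime_two hq1ne').mp hd
      have hge : ¬ 2 ≤ (q + 1).factorization 2 := fun hh =>
        hnd ((Nat.Prime.pow_dvd_iff_le_factorization Nat.prime_two hq1ne').mpr hh)
      omega
    rw [h0, h1, ← hk]
    omega
  haveI : Fact (Nat.Prime 2) := ⟨Nat.prime_two⟩
  refine ⟨Sylow.ofCard S (by rw [hScard, hfact]), Sylow.coe_ofCard _ _⟩
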